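/- Fix λ > 0, α ∈ [0,1], t > 0. Let p(t; y, ξ) be the transition density of skew bang-bang Brownian motion given by formulas (TDF1)–(TDF3), and p_∞ the stationary density p_∞(ξ) = 2αλ e^{-2λξ}1_{ξ>0} + 2(1-α)λ e^{2λξ}1_{ξ≤0}. Then the detailed-balance (duality) relation p(t; y, ξ)·p_∞(y) = p(t; ξ, y)·p_∞(ξ) holds for all y, ξ ∈ ℝ with y ≠ 0 and ξ ≠ 0. -/
import Mathlib


open Real MeasureTheory

/-- Left-continuous signum: `1` for positive arguments, `-1` otherwise. -/
noncomputable def sgnL (x : ℝ) : ℝ := if 0 < x then 1 else -1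

/-- Gaussian kernel `φ_t(x) = (2πt)^{-1/2} e^{-x²/(2t)}`. -/
noncomputable def phi (t x : ℝ) : ℝ :=
  1 / Real.sqrt (2 * Real.pi * t) * Real.exp (-x ^ 2 / (2 * t))

/-- The transition density of skew bang-bang Brownian motion, formulas
(TDF1)-(TDF3). -/
noncomputable def pTrans (lam α t y ξ : ℝ) : ℝ :=
  if 0 < ξ ∧ 0 < y then
    (2 * α - 1) * Real.exp (-(2 * lam * ξ)) * phi t (ξ + y - lam * t) +
      phi t (ξ - y + lam * t) +
      2 * α * lam * Real.exp (-(2 * lam * ξ)) *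
        ∫ u in Set.Ioi (ξ + y), phi t (u - lam * t)
  else if ξ < 0 ∧ y < 0 then
    (1 - 2 * α) * Real.exp (2 * lam * ξ) * phi t (-ξ - y - lam * t) +
      phi t (-ξ + y + lam * t) +
      2 * (1 - α) * lam * Real.exp (2 * lam * ξ) *
        ∫ u in Set.Ioi (-ξ - y), phi t (u - lam * t)
  else
    (1 + (2 * α - 1) * sgnL ξ) * Real.exp (-(2 * lam * |ξ|)) *
      (phi t (|ξ| + |y| - lam * t) +
        lam * ∫ u in Set.Ioi (|ξ| + |y|), phi t (u - lam * t))

/-- The stationary double-exponential density. -/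
noncomputable def pinf (lam α ξ : ℝ) : ℝ :=
  if 0 < ξ then 2 * α * lam * Real.exp (-(2 * lam * ξ))
  else 2 * (1 - α) * lam * Real.exp (2 * lam * ξ)

lemma key (lam t a b : ℝ) (ht : 0 < t) :
    Real.exp (-(2 * lam * b)) * phi t (a - b + lam * t)
      = Real.exp (-(2 * lam * a)) * phi t (b - a + lam * t) := by
  unfold phi
  have h : -(2 * lam * b) + -(a - b + lam * t) ^ 2 / (2 * t)
      = -(2 * lam * a) + -(b - a + lam * t) ^ 2 / (2 * t) := by
    field_simp
    ring
  rw [mul_left_comm, ← Real.exp_add, h, Real.exp_add, mul_left_comm]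

lemma key2 (lam t a b : ℝ) (ht : 0 < t) :
    Real.exp (2 * lam * b) * phi t (b - a + lam * t)
      = Real.exp (2 * lam * a) * phi t (a - b + lam * t) := by
  unfold phi
  have h : 2 * lam * b + -(b - a + lam * t) ^ 2 / (2 * t)
      = 2 * lam * a + -(a - b + lam * t) ^ 2 / (2 * t) := by
    field_simp
    ring
  rw [mul_left_comm, ← Real.exp_add, h, Real.exp_add, mul_left_comm]


/-- Detailed-balance (duality) relation for the skew bang-bang Brownian motion:
`p(t; y, ξ)·p_∞(y) = p(t; ξ, y)·p_∞(ξ)` for all `y ≠ 0`, `ξ ≠ 0`. -/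
theorem stmt_13 (lam α t : ℝ) (hlam : 0 < lam) (hα : α ∈ Set.Icc (0 : ℝ) 1)
    (ht : 0 < t) :
    ∀ y ξ : ℝ, y ≠ 0 → ξ ≠ 0 →
      pTrans lam α t y ξ * pinf lam α y = pTrans lam α t ξ y * pinf lam α ξ := by
  intro y ξ hy hξ
  rcases hy.lt_or_gt with hy | hy <;> rcases hξ.lt_or_gt with hξ | hξ
  · -- both negative
    have h1 : ¬(0 < ξ ∧ 0 < y) := by rintro ⟨h, -⟩; linarith
    have h2 : ¬(0 < y ∧ 0 < ξ) := by rintro ⟨h, -⟩; linarith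
    simp only [pTrans, pinf, if_neg h1, if_neg h2, if_pos (And.intro hξ hy),
      if_pos (And.intro hy hξ), if_neg (not_lt.2 hy.le), if_neg (not_lt.2 hξ.le)]
    rw [show -ξ - y = -y - ξ from by ring,
      show -ξ + y + lam * t = y - ξ + lam * t from by ring,
      show -y + ξ + lam * t = ξ - y + lam * t from by ring]
    linear_combination (2 * (1 - α) * lam) * key2 lam t ξ y ht
  · -- y neg, ξ pos
    have h1 : ¬(0 < ξ ∧ 0 < y) := by rintro ⟨-, h⟩; linarith
    have h2 : ¬(0 < y ∧ 0 < ξ) := by rintro ⟨h, -⟩; linarith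
    have h3 : ¬(ξ < 0 ∧ y < 0) := by rintro ⟨h, -⟩; linarith
    have h4 : ¬(y < 0 ∧ ξ < 0) := by rintro ⟨-, h⟩; linarith
    simp only [pTrans, pinf, sgnL, if_neg h1, if_neg h2, if_neg h3, if_neg h4,
      if_pos hξ, if_neg (not_lt.2 hy.le), abs_of_pos hξ, abs_of_neg hy]
    rw [show ξ + -y = -y + ξ from by ring,
      show -(2 * lam * -y) = 2 * lam * y from by ring]
    ring
  · -- y pos, ξ neg
    have h1 : ¬(0 < ξ ∧ 0 < y) := by rintro ⟨h, -⟩; linarith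
    have h2 : ¬(0 < y ∧ 0 < ξ) := by rintro ⟨-, h⟩; linarith
    have h3 : ¬(ξ < 0 ∧ y < 0) := by rintro ⟨-, h⟩; linarith
    have h4 : ¬(y < 0 ∧ ξ < 0) := by rintro ⟨h, -⟩; linarith
    simp only [pTrans, pinf, sgnL, if_neg h1, if_neg h2, if_neg h3, if_neg h4,
      if_pos hy, if_neg (not_lt.2 hξ.le), abs_of_pos hy, abs_of_neg hξ]
    rw [show -ξ + y = y + -ξ from by ring,
      show -(2 * lam * -ξ) = 2 * lam * ξ from by ring]
    ring
  · -- both positive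
    simp only [pTrans, pinf, if_pos (And.intro hξ hy), if_pos (And.intro hy hξ),
      if_pos hy, if_pos hξ]
    rw [show ξ + y = y + ξ from by ring]
    linear_combination (2 * α * lam) * key lam t ξ y ht
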